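/- Let q ≥ 3, fix g = (a b; c d) ∈ SL₂(F_q) with c ≠ 0, and fix x = (α β; γ δ) ∈ SL₂(F_q). If there exist upper-triangular matrices u₁ = (λ u; 0 λ⁻¹) and u₂ = (μ v; 0 μ⁻¹) in SL₂(F_q) with u₁ g u₂ = x, then γ ≠ 0, and for each fixed value of λ ∈ F_q* there is at most one pair (u, μ, v) completing such a factorization. -/

import Mathlib

lemma entries_of_eq {F : Type*} [Field F]
    (a b c d lam u mu v α β γ δ : F)
    (h : !![lam, u; 0, lam⁻¹] * !![a, b; c, d] * !![mu, v; 0, mu⁻¹] = !![α, β; γ, δ]) :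
    (lam * a + u * c) * mu = α ∧ lam⁻¹ * c * mu = γ ∧
      (lam⁻¹ * c) * v + (lam⁻¹ * d) * mu⁻¹ = δ := by
  have h00 := congrFun (congrFun h 0) 0
  have h10 := congrFun (congrFun h 1) 0
  have h11 := congrFun (congrFun h 1) 1
  simp [Matrix.mul_apply, Fin.sum_univ_two] at h00 h10 h11
  exact ⟨h00, h10, h11⟩

/-- Let `g = (a b; c d) ∈ SL₂(F_q)` with `c ≠ 0` and `x = (α β; γ δ) ∈ SL₂(F_q)`.
If `x = u₁ g u₂` for some upper-triangular `u₁ = (λ u; 0 λ⁻¹)`, `u₂ = (μ v; 0 μ⁻¹)`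
in `SL₂(F_q)`, then `γ ≠ 0`, and for each fixed `λ ∈ F_q*` there is at most one
triple `(u, μ, v)` giving such a factorization. -/
theorem borel_double_coset_unique {F : Type*} [Field F] [Fintype F] [DecidableEq F]
    (q : ℕ) (hq : Fintype.card F = q) (hq3 : 3 ≤ q)
    (a b c d α β γ δ : F) (hg : a * d - b * c = 1) (hx : α * δ - β * γ = 1) (hc : c ≠ 0)
    (hex : ∃ lam u mu v : F, lam ≠ 0 ∧ mu ≠ 0 ∧
      !![lam, u; 0, lam⁻¹] * !![a, b; c, d] * !![mu, v; 0, mu⁻¹] = !![α, β; γ, δ]) :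
    γ ≠ 0 ∧ ∀ lam : F, lam ≠ 0 → ∀ u₁ mu₁ v₁ u₂ mu₂ v₂ : F, mu₁ ≠ 0 → mu₂ ≠ 0 →
      !![lam, u₁; 0, lam⁻¹] * !![a, b; c, d] * !![mu₁, v₁; 0, mu₁⁻¹] = !![α, β; γ, δ] →
      !![lam, u₂; 0, lam⁻¹] * !![a, b; c, d] * !![mu₂, v₂; 0, mu₂⁻¹] = !![α, β; γ, δ] →
      (u₁, mu₁, v₁) = (u₂, mu₂, v₂) := by
  constructor
  · obtain ⟨lam, u, mu, v, hlam, hmu, h⟩ := hex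
    obtain ⟨-, h10, -⟩ := entries_of_eq a b c d lam u mu v α β γ δ h
    rw [← h10]
    exact mul_ne_zero (mul_ne_zero (inv_ne_zero hlam) hc) hmu
  · intro lam hlam u₁ mu₁ v₁ u₂ mu₂ v₂ hmu₁ hmu₂ h1 h2
    obtain ⟨e00, e10, e11⟩ := entries_of_eq a b c d lam u₁ mu₁ v₁ α β γ δ h1
    obtain ⟨f00, f10, f11⟩ := entries_of_eq a b c d lam u₂ mu₂ v₂ α β γ δ h2
    have hmu : mu₁ = mu₂ := by
      have := e10.trans f10.symm
      field_simp at this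
      exact this
    subst hmu
    have hu : u₁ = u₂ := by
      have := e00.trans f00.symm
      have h2 : u₁ * c = u₂ * c := by
        have h3 := mul_right_cancel₀ hmu₁ this
        linear_combination h3
      exact mul_right_cancel₀ hc h2
    have hv : v₁ = v₂ := by
      have := e11.trans f11.symm
      have h2 : (lam⁻¹ * c) * v₁ = (lam⁻¹ * c) * v₂ := by linear_combination this
      exact mul_left_cancel₀ (mul_ne_zero (inv_ne_zero hlam) hc) h2
    simp [hu, hv]
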